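/- arXiv:1606.04498 — 2 statements merged into one kernel-verified Lean document; each statement's English description precedes it below -/
import Mathlib

section
/- Lagrange inversion for the topological recursion kernel: let y_1,…,y_r be distinct elements of a field, P(Y)=∏_{j=1}^r(Y-y_j), and let Q_1,…,Q_r be given elements. Define Q(i) = ∑_{k=1}^{r} (-1)^k y_i^{r-k} Q_k for each i. Then for each m with 1 ≤ m ≤ r, Q_m = -∑_{i=1}^{r} (Q(i)/P'(y_i)) · e_{m-1}(y_1,…,ŷ_i,…,y_r), where e_{m-1} is the elementary symmetric polynomial of degree m-1 in the roots with y_i omitted. -/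
open Finset

open Polynomial in
/-- Lagrange inversion, Lemma 4.7 of Bouchard–Eynard with `p₀ = 1`:
with `Q(i) = ∑_{k=1}^r (-1)^k y_i^{r-k} Q_k`, for each `1 ≤ m ≤ r`,
`Q_m = -∑_i (Q(i)/P'(y_i)) · e_{m-1}(y₁,…,ŷ_i,…,y_r)`. -/
theorem stmt3 {F : Type*} [Field F] [CharZero F] (r : ℕ) (hr : 1 ≤ r)
    (y : Fin r → F) (hy : Function.Injective y) (Q : ℕ → F) :
    ∀ m, 1 ≤ m → m ≤ r →
      Q m = -∑ i : Fin r,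
        ((∑ k ∈ Finset.Icc 1 r, (-1 : F) ^ k * (y i) ^ (r - k) * Q k) /
            ∏ l ∈ Finset.univ.erase i, (y i - y l)) *
          ∑ S ∈ (Finset.univ.erase i).powersetCard (m - 1), ∏ l ∈ S, y l := by
  intro m hm1 hmr
  have hinj : Set.InjOn y (Finset.univ : Finset (Fin r)) := fun a _ b _ h => hy h
  set f : Polynomial F := ∑ k ∈ Finset.Icc 1 r, C ((-1 : F) ^ k * Q k) * X ^ (r - k) with hf
  have hcard : (Finset.univ : Finset (Fin r)).card = r := by simp
  have hdeg : f.degree < (Finset.univ : Finset (Fin r)).card := by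
    have h2 : f.degree < (r : WithBot ℕ) := by
      apply lt_of_le_of_lt (degree_sum_le _ _)
      rw [Finset.sup_lt_iff (by exact_mod_cast WithBot.bot_lt_coe r)]
      intro k hk
      refine lt_of_le_of_lt (degree_C_mul_X_pow_le _ _) ?_
      rw [Nat.cast_lt]
      simp only [mem_Icc] at hk
      omega
    rwa [hcard]
  have hcoefff : f.coeff (r - m) = (-1 : F) ^ m * Q m := by
    rw [hf, finset_sum_coeff]
    rw [Finset.sum_eq_single m]
    · rw [coeff_C_mul, coeff_X_pow, if_pos rfl, mul_one]
    · intro k hk hkm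
      simp only [coeff_C_mul, coeff_X_pow]
      simp only [mem_Icc] at hk
      rw [if_neg (by omega), mul_zero]
    · intro h
      exact absurd (Finset.mem_Icc.mpr ⟨hm1, hmr⟩) h
  have heval : ∀ i : Fin r, f.eval (y i)
      = ∑ k ∈ Finset.Icc 1 r, (-1 : F) ^ k * (y i) ^ (r - k) * Q k := by
    intro i
    rw [hf, eval_finset_sum]
    refine Finset.sum_congr rfl fun k _ => ?_
    simp only [eval_mul, eval_C, eval_pow, eval_X]
    ring
  have hbasis : ∀ i : Fin r, (Lagrange.basis Finset.univ y i).coeff (r - m)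
      = (∏ l ∈ Finset.univ.erase i, (y i - y l))⁻¹ * ((-1 : F) ^ (m - 1) *
        ∑ S ∈ (Finset.univ.erase i).powersetCard (m - 1), ∏ l ∈ S, y l) := by
    intro i
    have hcard' : (Finset.univ.erase i).card = r - 1 := by
      rw [Finset.card_erase_of_mem (Finset.mem_univ i), hcard]
    rw [Lagrange.basis]
    simp_rw [Lagrange.basisDivisor]
    rw [Finset.prod_mul_distrib, ← map_prod, coeff_C_mul]
    have hrw : ∏ j ∈ Finset.univ.erase i, (X - C (y j))
        = (((Finset.univ.erase i).val.map y).map (fun t => X - C t)).prod := by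
      rw [Multiset.map_map]; rfl
    have hcm : Multiset.card ((Finset.univ.erase i).val.map y) = r - 1 := by
      rw [Multiset.card_map]; exact hcard'
    rw [hrw, Multiset.prod_X_sub_C_coeff _ (by rw [hcm]; omega)]
    rw [hcm]
    have h1 : r - 1 - (r - m) = m - 1 := by omega
    rw [h1, Finset.esymm_map_val, Finset.prod_inv_distrib]
  have key := Lagrange.eq_interpolate hinj hdeg
  have hc := congrArg (fun p => p.coeff (r - m)) key
  simp only [Lagrange.interpolate_apply, finset_sum_coeff, coeff_C_mul] at hc
  rw [hcoefff] at hc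
  have hsum : ∑ i : Fin r, f.eval (y i) * (Lagrange.basis Finset.univ y i).coeff (r - m)
      = (-1 : F) ^ (m - 1) * ∑ i : Fin r,
        ((∑ k ∈ Finset.Icc 1 r, (-1 : F) ^ k * (y i) ^ (r - k) * Q k) /
            ∏ l ∈ Finset.univ.erase i, (y i - y l)) *
          ∑ S ∈ (Finset.univ.erase i).powersetCard (m - 1), ∏ l ∈ S, y l := by
    rw [Finset.mul_sum]
    refine Finset.sum_congr rfl fun i _ => ?_
    rw [heval i, hbasis i, div_eq_mul_inv]
    ring
  rw [hsum] at hc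
  have hm' : m - 1 + 1 = m := Nat.sub_add_cancel hm1
  have hpow : ((-1 : F)) ^ m = (-1 : F) ^ (m - 1) * (-1) := by rw [← pow_succ, hm']
  rw [hpow, mul_assoc] at hc
  have hne : ((-1 : F) ^ (m - 1)) ≠ 0 := pow_ne_zero _ (by norm_num)
  have h3 := mul_left_cancel₀ hne hc
  linear_combination -h3
end

section
/- Relation between R and E: for all g, n, k ≥ 0, E^{(k)}W_{g,n+1}(t; z) = ∑_{i=0}^{k} ∑_{β ⊆ t, |β|=i} (∏_{s ∈ β} W_{0,1}(s)) · R^{(k−i)}W_{g,n+1}(t∖β; z), where R^{(j)}W is defined like E^{(j)}W but with all set-partition terms containing a factor W_{0,1} excluded (i.e. excluding blocks with (g_i, |μ_i|+|J_i|) = (0,1)), and R^{(0)}W_{g,n+1}(z) = E^{(0)}W_{g,n+1}(z) = δ_{g,0}δ_{n,0}. -/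
open Finset
open scoped Classical

/-- Set partitions of a finite set `t`: finsets of nonempty pairwise disjoint blocks
whose union is `t`. -/
noncomputable def setPartitions {σ : Type*} [DecidableEq σ] (t : Finset σ) :
    Finset (Finset (Finset σ)) :=
  (t.powerset.powerset).filter
    (fun parts => parts.sup id = t ∧ ∅ ∉ parts ∧
      ∀ p ∈ parts, ∀ q ∈ parts, p ≠ q → Disjoint p q)

/-- `E^{(k)}W_{g,n+1}(t; z)`: sum over set partitions `μ` of `t`, decompositions of `z`
indexed by the blocks of `μ`, and genus assignments summing to `g + ℓ(μ) - k`, of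
`∏_i W_{g_i,|μ_i|+|J_i|}(μ_i, J_i)`. -/
noncomputable def Esum {σ R : Type*} [DecidableEq σ] [CommRing R]
    (W : ℕ → Multiset σ → R) (k g : ℕ) (t zs : Finset σ) : R :=
  ∑ parts ∈ setPartitions t,
    ∑ f : { a // a ∈ zs } → { P // P ∈ parts },
      ∑ gs : { P // P ∈ parts } → Fin (g + parts.card + 1),
        if (∑ P : { P // P ∈ parts }, ((gs P : ℕ) : ℤ)) = (g : ℤ) + parts.card - k then
          ∏ P : { P // P ∈ parts },
            W (gs P)
              (P.1.val + (zs.attach.filter (fun a => f a = P)).val.map Subtype.val)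
        else 0

/-- `R^{(k)}W_{g,n+1}(t; z)`: as `E^{(k)}`, but excluding every term containing a factor
`W_{0,1}`, i.e. a block with `(g_i, |μ_i| + |J_i|) = (0,1)`. -/
noncomputable def Rsum {σ R : Type*} [DecidableEq σ] [CommRing R]
    (W : ℕ → Multiset σ → R) (k g : ℕ) (t zs : Finset σ) : R :=
  ∑ parts ∈ setPartitions t,
    ∑ f : { a // a ∈ zs } → { P // P ∈ parts },
      ∑ gs : { P // P ∈ parts } → Fin (g + parts.card + 1),
        if (∑ P : { P // P ∈ parts }, ((gs P : ℕ) : ℤ)) = (g : ℤ) + parts.card - k ∧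
            ∀ P : { P // P ∈ parts },
              ¬((gs P : ℕ) = 0 ∧
                P.1.card + (zs.attach.filter (fun a => f a = P)).card = 1) then
          ∏ P : { P // P ∈ parts },
            W (gs P)
              (P.1.val + (zs.attach.filter (fun a => f a = P)).val.map Subtype.val)
        else 0

set_option linter.unusedSectionVars false
set_option linter.unusedVariables false

namespace S7

variable {σ R : Type*} [DecidableEq σ] [CommRing R]

abbrev Idx (σ : Type*) (zs : Finset σ) : Type _ :=
  Σ parts : Finset (Finset σ),
    ({ a // a ∈ zs } → { P // P ∈ parts }) × ({ P // P ∈ parts } → ℕ)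

variable {zs : Finset σ}

noncomputable def fib (x : Idx σ zs) (P : { P // P ∈ x.1 }) : Finset { a // a ∈ zs } :=
  zs.attach.filter fun a => x.2.1 a = P

noncomputable def term (W : ℕ → Multiset σ → R) (x : Idx σ zs) : R :=
  ∏ P : { P // P ∈ x.1 }, W (x.2.2 P) (P.1.val + (fib x P).val.map Subtype.val)

def econd (g k : ℕ) (x : Idx σ zs) : Prop :=
  (∑ P : { P // P ∈ x.1 }, (x.2.2 P : ℤ)) = (g : ℤ) + x.1.card - k

def rcond (x : Idx σ zs) : Prop :=
  ∀ P : { P // P ∈ x.1 }, ¬(x.2.2 P = 0 ∧ P.1.card + (fib x P).card = 1)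

noncomputable def ESet (g k : ℕ) (u zs : Finset σ) : Finset (Idx σ zs) :=
  (setPartitions u).sigma fun parts =>
    (Finset.univ ×ˢ Fintype.piFinset fun _ : { P // P ∈ parts } =>
        Finset.range (g + parts.card + 1)).filter
      fun fg => econd g k ⟨parts, fg⟩

noncomputable def RSet (g k : ℕ) (u zs : Finset σ) : Finset (Idx σ zs) :=
  (setPartitions u).sigma fun parts =>
    (Finset.univ ×ˢ Fintype.piFinset fun _ : { P // P ∈ parts } =>
        Finset.range (g + parts.card + 1)).filter
      fun fg => econd g k ⟨parts, fg⟩ ∧ rcond ⟨parts, fg⟩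

lemma mem_ESet {g k : ℕ} {u : Finset σ} {x : Idx σ zs} :
    x ∈ ESet g k u zs ↔
      x.1 ∈ setPartitions u ∧ (∀ P, x.2.2 P < g + x.1.card + 1) ∧ econd g k x := by
  obtain ⟨parts, fg⟩ := x
  simp only [ESet, Finset.mem_sigma, Finset.mem_filter, Finset.mem_product, Finset.mem_univ,
    true_and, Fintype.mem_piFinset, Finset.mem_range]


lemma mem_RSet {g k : ℕ} {u : Finset σ} {x : Idx σ zs} :
    x ∈ RSet g k u zs ↔
      x.1 ∈ setPartitions u ∧ (∀ P, x.2.2 P < g + x.1.card + 1) ∧ econd g k x ∧ rcond x := by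
  obtain ⟨parts, fg⟩ := x
  simp only [RSet, Finset.mem_sigma, Finset.mem_filter, Finset.mem_product, Finset.mem_univ,
    true_and, Fintype.mem_piFinset, Finset.mem_range]


lemma sum_fin_eq {ι M : Type*} [Fintype ι] [DecidableEq ι] [AddCommMonoid M] (N : ℕ)
    (G : (ι → ℕ) → M) :
    (∑ v : ι → Fin N, G fun i => (v i : ℕ)) =
      ∑ v ∈ Fintype.piFinset fun _ : ι => Finset.range N, G v :=
  Finset.sum_bij'
    (fun v _ => fun i => (v i : ℕ))
    (fun v hv => fun i => ⟨v i, by simpa using Fintype.mem_piFinset.mp hv i⟩)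
    (fun v _ => Fintype.mem_piFinset.mpr fun i => Finset.mem_range.mpr (v i).isLt)
    (fun v _ => Finset.mem_univ _)
    (fun v _ => rfl)
    (fun v _ => rfl)
    (fun v _ => rfl)

lemma Esum_eq (W : ℕ → Multiset σ → R) (g k : ℕ) (u : Finset σ) :
    Esum W k g u zs = ∑ x ∈ ESet g k u zs, term W x := by
  unfold Esum ESet
  rw [Finset.sum_sigma]
  refine Finset.sum_congr rfl fun parts _ => ?_
  rw [Finset.sum_filter, Finset.sum_product]
  refine Finset.sum_congr rfl fun f _ => ?_
  refine Eq.trans (sum_fin_eq (g + parts.card + 1) fun v =>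
    if (∑ P : { P // P ∈ parts }, ((v P : ℕ) : ℤ)) = (g : ℤ) + parts.card - k then
      ∏ P : { P // P ∈ parts },
        W (v P) (P.1.val + (zs.attach.filter (fun a => f a = P)).val.map Subtype.val)
    else 0) ?_
  refine Finset.sum_congr rfl fun v _ => ?_
  exact if_congr Iff.rfl rfl rfl

lemma Rsum_eq (W : ℕ → Multiset σ → R) (g k : ℕ) (u : Finset σ) :
    Rsum W k g u zs = ∑ x ∈ RSet g k u zs, term W x := by
  unfold Rsum RSet
  rw [Finset.sum_sigma]
  refine Finset.sum_congr rfl fun parts _ => ?_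
  rw [Finset.sum_filter, Finset.sum_product]
  refine Finset.sum_congr rfl fun f _ => ?_
  refine Eq.trans (sum_fin_eq (g + parts.card + 1) fun v =>
    if (∑ P : { P // P ∈ parts }, ((v P : ℕ) : ℤ)) = (g : ℤ) + parts.card - k ∧
        ∀ P : { P // P ∈ parts },
          ¬((v P : ℕ) = 0 ∧
            P.1.card + (zs.attach.filter (fun a => f a = P)).card = 1) then
      ∏ P : { P // P ∈ parts },
        W (v P) (P.1.val + (zs.attach.filter (fun a => f a = P)).val.map Subtype.val)
    else 0) ?_
  refine Finset.sum_congr rfl fun v _ => ?_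
  exact if_congr Iff.rfl rfl rfl

end S7

namespace S7

variable {σ R : Type*} [DecidableEq σ] [CommRing R] {zs : Finset σ}

lemma mem_setPartitions {u : Finset σ} {parts : Finset (Finset σ)} :
    parts ∈ setPartitions u ↔
      (∀ P ∈ parts, P ⊆ u) ∧ parts.sup id = u ∧ ∅ ∉ parts ∧
        ∀ p ∈ parts, ∀ q ∈ parts, p ≠ q → Disjoint p q := by
  simp only [setPartitions, Finset.mem_filter, Finset.mem_powerset]
  constructor
  · rintro ⟨h1, h2⟩
    exact ⟨fun P hP => Finset.mem_powerset.mp (h1 hP), h2⟩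
  · rintro ⟨h1, h2⟩
    exact ⟨fun P hP => Finset.mem_powerset.mpr (h1 P hP), h2⟩

noncomputable def trivSet (x : Idx σ zs) : Finset σ :=
  (x.1.attach.filter fun P => x.2.2 P = 0 ∧ P.1.card + (fib x P).card = 1).sup fun P => P.1

lemma mem_trivSet {u : Finset σ} {x : Idx σ zs} (hP : x.1 ∈ setPartitions u) {s : σ} :
    s ∈ trivSet x ↔ ∃ h : {s} ∈ x.1, x.2.2 ⟨{s}, h⟩ = 0 ∧ fib x ⟨{s}, h⟩ = ∅ := by
  unfold trivSet
  rw [Finset.mem_sup]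
  constructor
  · rintro ⟨P, hPf, hsP⟩
    rw [Finset.mem_filter] at hPf
    obtain ⟨-, hg0, hc⟩ := hPf
    have hne : P.1 ≠ ∅ := fun h => (mem_setPartitions.mp hP).2.2.1 (h ▸ P.2)
    have hpos : 0 < P.1.card := Finset.card_pos.mpr (Finset.nonempty_iff_ne_empty.mpr hne)
    have hcard1 : P.1.card = 1 := by omega
    have hcard0 : (fib x P).card = 0 := by omega
    have hPs : P.1 = {s} := by
      obtain ⟨a, ha⟩ := Finset.card_eq_one.mp hcard1
      rw [ha] at hsP ⊢
      rw [Finset.mem_singleton] at hsP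
      rw [hsP]
    have hmem : ({s} : Finset σ) ∈ x.1 := hPs ▸ P.2
    have hPeq : P = ⟨{s}, hmem⟩ := Subtype.ext hPs
    refine ⟨hmem, ?_, ?_⟩
    · rw [← hPeq]; exact hg0
    · rw [← hPeq]; exact Finset.card_eq_zero.mp hcard0
  · rintro ⟨h, hg0, hfib⟩
    refine ⟨⟨{s}, h⟩, ?_, Finset.mem_singleton_self s⟩
    rw [Finset.mem_filter]
    exact ⟨Finset.mem_attach _ _, hg0, by simp [hfib]⟩

lemma trivSet_subset {u : Finset σ} {x : Idx σ zs} (hP : x.1 ∈ setPartitions u) :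
    trivSet x ⊆ u :=
  Finset.sup_le fun P _ => (mem_setPartitions.mp hP).1 P.1 P.2

noncomputable def Phi (β : Finset σ) (y : Idx σ zs) : Idx σ zs :=
  ⟨y.1 ∪ β.image fun s => ({s} : Finset σ),
    (fun a => ⟨(y.2.1 a).1, Finset.mem_union_left _ (y.2.1 a).2⟩,
     fun P => if h : P.1 ∈ y.1 then y.2.2 ⟨P.1, h⟩ else 0)⟩

noncomputable def Psi (β : Finset σ) (x : Idx σ zs)
    (hf : ∀ a, (x.2.1 a).1 ∈ x.1 \ β.image fun s => ({s} : Finset σ)) : Idx σ zs :=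
  ⟨x.1 \ β.image fun s => ({s} : Finset σ),
    (fun a => ⟨(x.2.1 a).1, hf a⟩,
     fun P => x.2.2 ⟨P.1, (Finset.mem_sdiff.mp P.2).1⟩)⟩

lemma Idx.ext' {p q : Idx σ zs} (h1 : p.1 = q.1)
    (h2 : ∀ a, (p.2.1 a).1 = (q.2.1 a).1)
    (h3 : ∀ P : { P // P ∈ p.1 }, p.2.2 P = q.2.2 ⟨P.1, h1 ▸ P.2⟩) : p = q := by
  obtain ⟨p1, pf, pg⟩ := p
  obtain ⟨q1, qf, qg⟩ := q
  dsimp only at h1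
  subst h1
  dsimp only at h2 h3
  have e1 : pf = qf := funext fun a => Subtype.ext (h2 a)
  have e2 : pg = qg := funext fun P => h3 P
  rw [e1, e2]

@[to_additive]
lemma prod_subtype_eq_prod_dite {ι M : Type*} [CommMonoid M] (C : Finset ι)
    (F : { P // P ∈ C } → M) :
    (∏ P : { P // P ∈ C }, F P) = ∏ Q ∈ C, (if h : Q ∈ C then F ⟨Q, h⟩ else 1) := by
  rw [Finset.univ_eq_attach, ← Finset.prod_attach C fun Q => if h : Q ∈ C then F ⟨Q, h⟩ else 1]
  exact Finset.prod_congr rfl fun P _ => by rw [dif_pos P.2]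

@[to_additive]
lemma prod_dite_subset {ι M : Type*} [CommMonoid M] {C D : Finset ι} (hCD : C ⊆ D)
    (F : { P // P ∈ D } → M) :
    (∏ Q ∈ C, if h : Q ∈ D then F ⟨Q, h⟩ else 1) = ∏ P : { P // P ∈ C }, F ⟨P.1, hCD P.2⟩ := by
  rw [Finset.univ_eq_attach, ← Finset.prod_attach C fun Q => if h : Q ∈ D then F ⟨Q, h⟩ else 1]
  exact Finset.prod_congr rfl fun P _ => by rw [dif_pos (hCD P.2)]

@[to_additive]
lemma prod_subtype_split {ι M : Type*} [DecidableEq ι] [CommMonoid M] {A B parts : Finset ι}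
    (hd : Disjoint A B) (hU : A ∪ B = parts) (F : { P // P ∈ parts } → M) :
    (∏ P : { P // P ∈ parts }, F P)
      = (∏ P : { P // P ∈ A }, F ⟨P.1, hU ▸ Finset.mem_union_left B P.2⟩)
        * ∏ P : { P // P ∈ B }, F ⟨P.1, hU ▸ Finset.mem_union_right A P.2⟩ := by
  subst hU
  rw [prod_subtype_eq_prod_dite, Finset.prod_union hd,
    prod_dite_subset Finset.subset_union_left F,
    prod_dite_subset Finset.subset_union_right F]

end S7

namespace S7

variable {σ R : Type*} [DecidableEq σ] [CommRing R] {zs : Finset σ}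

lemma fib_Psi {β : Finset σ} (x : Idx σ zs)
    (hf : ∀ a, (x.2.1 a).1 ∈ x.1 \ β.image fun s => ({s} : Finset σ))
    (P : { P // P ∈ x.1 \ β.image fun s => ({s} : Finset σ) }) :
    fib (Psi β x hf) P = fib x ⟨P.1, (Finset.mem_sdiff.mp P.2).1⟩ := by
  unfold fib Psi
  refine Finset.filter_congr fun a _ => ?_
  simp [Subtype.ext_iff]

lemma fib_Phi_mem {β : Finset σ} (y : Idx σ zs)
    (P : { P // P ∈ y.1 ∪ β.image fun s => ({s} : Finset σ) }) (h : P.1 ∈ y.1) :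
    fib (Phi β y) P = fib y ⟨P.1, h⟩ := by
  unfold fib Phi
  refine Finset.filter_congr fun a _ => ?_
  simp [Subtype.ext_iff]

lemma fib_Phi_not_mem {β : Finset σ} (y : Idx σ zs)
    (P : { P // P ∈ y.1 ∪ β.image fun s => ({s} : Finset σ) }) (h : P.1 ∉ y.1) :
    fib (Phi β y) P = ∅ := by
  unfold fib Phi
  refine Finset.filter_false_of_mem fun a _ hcon => ?_
  have : (y.2.1 a).1 = P.1 := congrArg Subtype.val hcon
  exact h (this ▸ (y.2.1 a).2)

lemma gs_le {g k : ℕ} {x : Idx σ zs} (he : econd g k x) (Q : { P // P ∈ x.1 }) :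
    (x.2.2 Q : ℤ) ≤ (g : ℤ) + x.1.card - k := by
  rw [← he]
  exact Finset.single_le_sum (f := fun P : { P // P ∈ x.1 } => (x.2.2 P : ℤ))
    (fun P _ => Int.natCast_nonneg _) (Finset.mem_univ Q)

section Good

variable {g k : ℕ} {t β : Finset σ} {x : Idx σ zs}

lemma G2' (hP : x.1 ∈ setPartitions t) (htr : trivSet x = β) {P : { P // P ∈ x.1 }}
    (hPim : P.1 ∈ β.image fun s => ({s} : Finset σ)) :
    x.2.2 P = 0 ∧ fib x P = ∅ := by
  obtain ⟨s, hs, hPs⟩ := Finset.mem_image.mp hPim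
  have hstr : s ∈ trivSet x := htr.symm ▸ hs
  rw [mem_trivSet hP] at hstr
  obtain ⟨h, hg0, hfib⟩ := hstr
  have hPe : P = ⟨{s}, h⟩ := Subtype.ext hPs.symm
  rw [hPe]
  exact ⟨hg0, hfib⟩

lemma G3' (hP : x.1 ∈ setPartitions t) (htr : trivSet x = β) :
    ∀ a, (x.2.1 a).1 ∈ x.1 \ β.image fun s => ({s} : Finset σ) := by
  intro a
  rw [Finset.mem_sdiff]
  refine ⟨(x.2.1 a).2, fun him => ?_⟩
  have hfib := (G2' hP htr him).2
  have ha : a ∈ fib x (x.2.1 a) := Finset.mem_filter.mpr ⟨Finset.mem_attach _ _, rfl⟩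
  rw [hfib] at ha
  exact absurd ha (Finset.notMem_empty a)

lemma G4' (hP : x.1 ∈ setPartitions t) (htr : trivSet x = β) {P : { P // P ∈ x.1 }}
    (hPim : P.1 ∉ β.image fun s => ({s} : Finset σ)) :
    ¬(x.2.2 P = 0 ∧ P.1.card + (fib x P).card = 1) := by
  rintro ⟨hg0, hc⟩
  have hne := (mem_setPartitions.mp hP).2.2.1
  have h1 : 0 < P.1.card := by
    rcases Finset.eq_empty_or_nonempty P.1 with h | h
    · exact absurd (h ▸ P.2) hne
    · exact Finset.card_pos.mpr h
  obtain ⟨s, hPs⟩ : ∃ s, P.1 = {s} := Finset.card_eq_one.mp (by omega)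
  have hstr : s ∈ trivSet x := by
    unfold trivSet
    rw [Finset.mem_sup]
    exact ⟨P, Finset.mem_filter.mpr ⟨Finset.mem_attach _ _, hg0, hc⟩,
      hPs ▸ Finset.mem_singleton_self s⟩
  rw [htr] at hstr
  exact hPim (hPs ▸ Finset.mem_image_of_mem _ hstr)

lemma G5' (hP : x.1 ∈ setPartitions t) (htr : trivSet x = β) :
    (β.image fun s => ({s} : Finset σ)) ⊆ x.1 := by
  intro Q hQ
  obtain ⟨s, hs, rfl⟩ := Finset.mem_image.mp hQ
  exact ((mem_trivSet hP).mp (htr.symm ▸ hs)).1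

lemma G6' (hP : x.1 ∈ setPartitions t) (htr : trivSet x = β) :
    x.1 \ (β.image fun s => ({s} : Finset σ)) ∈ setPartitions (t \ β) := by
  obtain ⟨hsub, hsup, hne, hdisj⟩ := mem_setPartitions.mp hP
  have hsub' : ∀ P ∈ x.1 \ (β.image fun s => ({s} : Finset σ)), P ⊆ t \ β := by
    intro P hPm
    rw [Finset.mem_sdiff] at hPm
    obtain ⟨hPx, hPim⟩ := hPm
    intro a haP
    rw [Finset.mem_sdiff]
    refine ⟨hsub P hPx haP, fun haβ => ?_⟩
    obtain ⟨h1, -, -⟩ := (mem_trivSet hP).mp (htr.symm ▸ haβ)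
    have hPne : P ≠ {a} := fun h => hPim (h ▸ Finset.mem_image_of_mem _ haβ)
    exact Finset.disjoint_left.mp (hdisj P hPx {a} h1 hPne) haP (Finset.mem_singleton_self a)
  refine mem_setPartitions.mpr ⟨hsub', ?_, ?_, ?_⟩
  · apply le_antisymm
    · exact Finset.sup_le fun P hPm => hsub' P hPm
    · intro a ha
      rw [Finset.mem_sdiff] at ha
      obtain ⟨hat, haβ⟩ := ha
      have h2 : a ∈ x.1.sup id := hsup ▸ hat
      rw [Finset.mem_sup] at h2
      obtain ⟨P, hPx, haP⟩ := h2
      rw [Finset.mem_sup]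
      refine ⟨P, ?_, haP⟩
      rw [Finset.mem_sdiff]
      refine ⟨hPx, fun him => ?_⟩
      obtain ⟨s, hs, rfl⟩ := Finset.mem_image.mp him
      have : a = s := Finset.mem_singleton.mp haP
      exact haβ (this ▸ hs)
  · intro h
    exact hne (Finset.mem_sdiff.mp h).1
  · intro p hp q hq hpq
    exact hdisj p (Finset.mem_sdiff.mp hp).1 q (Finset.mem_sdiff.mp hq).1 hpq

end Good

lemma L1 {t β : Finset σ} (hβ : β ⊆ t) {parts' : Finset (Finset σ)}
    (hp' : parts' ∈ setPartitions (t \ β)) :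
    parts' ∪ (β.image fun s => ({s} : Finset σ)) ∈ setPartitions t := by
  obtain ⟨hsub, hsup, hne, hdisj⟩ := mem_setPartitions.mp hp'
  refine mem_setPartitions.mpr ⟨?_, ?_, ?_, ?_⟩
  · intro P hP
    rcases Finset.mem_union.mp hP with h | h
    · exact (hsub P h).trans (Finset.sdiff_subset)
    · obtain ⟨s, hs, rfl⟩ := Finset.mem_image.mp h
      simpa using hβ hs
  · rw [Finset.sup_union, hsup, Finset.sup_image]
    have : ((id : Finset σ → Finset σ) ∘ fun s => ({s} : Finset σ)) = singleton := rfl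
    rw [this, Finset.sup_singleton_eq_self]
    exact Finset.sdiff_union_of_subset hβ
  · rw [Finset.mem_union]
    rintro (h | h)
    · exact hne h
    · obtain ⟨s, -, hs⟩ := Finset.mem_image.mp h
      exact Finset.singleton_ne_empty s hs
  · have sdisj : ∀ P ∈ parts', ∀ s ∈ β, Disjoint P ({s} : Finset σ) := by
      intro P hP s hs
      rw [Finset.disjoint_singleton_right]
      intro hsP
      exact (Finset.mem_sdiff.mp (hsub P hP hsP)).2 hs
    intro p hp q hq hpq
    rcases Finset.mem_union.mp hp with h1 | h1 <;> rcases Finset.mem_union.mp hq with h2 | h2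
    · exact hdisj p h1 q h2 hpq
    · obtain ⟨s, hs, rfl⟩ := Finset.mem_image.mp h2
      exact sdisj p h1 s hs
    · obtain ⟨s, hs, rfl⟩ := Finset.mem_image.mp h1
      exact (sdisj q h2 s hs).symm
    · obtain ⟨s1, hs1, rfl⟩ := Finset.mem_image.mp h1
      obtain ⟨s2, hs2, rfl⟩ := Finset.mem_image.mp h2
      exact Finset.disjoint_singleton.mpr fun h => hpq (by rw [h])

lemma Ldisj {t β : Finset σ} {parts' : Finset (Finset σ)}
    (hp' : parts' ∈ setPartitions (t \ β)) :
    Disjoint parts' (β.image fun s => ({s} : Finset σ)) := by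
  rw [Finset.disjoint_right]
  rintro Q hQim hQp
  obtain ⟨s, hs, rfl⟩ := Finset.mem_image.mp hQim
  have := (mem_setPartitions.mp hp').1 {s} hQp (Finset.mem_singleton_self s)
  exact (Finset.mem_sdiff.mp this).2 hs

end S7

namespace S7

variable {σ R : Type*} [DecidableEq σ] [CommRing R] {zs : Finset σ}

lemma triv_factor (W : ℕ → Multiset σ → R) {t β : Finset σ} {x : Idx σ zs}
    (hP : x.1 ∈ setPartitions t) (htr : trivSet x = β) {s : σ} (hs : s ∈ β)
    (Q : { P // P ∈ x.1 }) (hQ : Q.1 = {s}) :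
    W (x.2.2 Q) (Q.1.val + (fib x Q).val.map Subtype.val) = W 0 {s} := by
  obtain ⟨h', hg0, hfib⟩ := (mem_trivSet hP).mp (htr.symm ▸ hs)
  have hQe : Q = ⟨{s}, h'⟩ := Subtype.ext hQ
  subst hQe
  rw [hg0, hfib]
  simp

lemma sum_Psi {t β : Finset σ} {x : Idx σ zs}
    (hP : x.1 ∈ setPartitions t) (htr : trivSet x = β) :
    (∑ P : { P // P ∈ x.1 }, (x.2.2 P : ℤ))
      = ∑ P : { P // P ∈ x.1 \ β.image fun s => ({s} : Finset σ) },
          (x.2.2 ⟨P.1, (Finset.mem_sdiff.mp P.2).1⟩ : ℤ) := by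
  have hU : (x.1 \ β.image fun s => ({s} : Finset σ)) ∪ (β.image fun s => ({s} : Finset σ)) = x.1 :=
    Finset.sdiff_union_of_subset (G5' hP htr)
  rw [sum_subtype_split Finset.sdiff_disjoint hU
    (fun P : { P // P ∈ x.1 } => (x.2.2 P : ℤ))]
  refine Eq.trans (congrArg₂ (· + ·)
    (Finset.sum_congr
      (g := fun P : { P // P ∈ x.1 \ β.image fun s => ({s} : Finset σ) } =>
        (x.2.2 ⟨P.1, (Finset.mem_sdiff.mp P.2).1⟩ : ℤ)) rfl (fun P _ => rfl))
    (Finset.sum_eq_zero (fun P _ => ?_))) (add_zero _)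
  exact_mod_cast (G2' hP htr P.2).1

lemma sum_Phi {β : Finset σ} (y : Idx σ zs)
    (hdis : Disjoint y.1 (β.image fun s => ({s} : Finset σ))) :

    (∑ P : { P // P ∈ y.1 ∪ β.image fun s => ({s} : Finset σ) }, ((Phi β y).2.2 P : ℤ))
      = ∑ P : { P // P ∈ y.1 }, (y.2.2 P : ℤ) := by
  rw [sum_subtype_split hdis rfl
    (fun P : { P // P ∈ y.1 ∪ β.image fun s => ({s} : Finset σ) } => ((Phi β y).2.2 P : ℤ))]
  refine Eq.trans (congrArg₂ (· + ·)
    (Finset.sum_congr (g := fun P : { P // P ∈ y.1 } => (y.2.2 P : ℤ)) rfl (fun P _ => ?_))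
    (Finset.sum_eq_zero (fun P _ => ?_))) (add_zero _)
  · show ((if h : P.1 ∈ y.1 then y.2.2 ⟨P.1, h⟩ else 0 : ℕ) : ℤ) = (y.2.2 P : ℤ)
    rw [dif_pos P.2]
  · show ((if h : P.1 ∈ y.1 then y.2.2 ⟨P.1, h⟩ else 0 : ℕ) : ℤ) = 0
    rw [dif_neg (Finset.disjoint_right.mp hdis P.2)]
    rfl

lemma prod_Psi (W : ℕ → Multiset σ → R) {t β : Finset σ} {x : Idx σ zs}
    (hP : x.1 ∈ setPartitions t) (htr : trivSet x = β)
    (hf : ∀ a, (x.2.1 a).1 ∈ x.1 \ β.image fun s => ({s} : Finset σ)) :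
    term W x = (∏ s ∈ β, W 0 {s}) * term W (Psi β x hf) := by
  have hU : (x.1 \ β.image fun s => ({s} : Finset σ)) ∪ (β.image fun s => ({s} : Finset σ)) = x.1 :=
    Finset.sdiff_union_of_subset (G5' hP htr)
  unfold term
  rw [prod_subtype_split Finset.sdiff_disjoint hU
    (fun P : { P // P ∈ x.1 } =>
      W (x.2.2 P) (P.1.val + (fib x P).val.map Subtype.val)), mul_comm]
  congr 1
  · rw [prod_subtype_eq_prod_dite,
      Finset.prod_image (fun a _ b _ h => Finset.singleton_injective h)]
    refine Finset.prod_congr rfl fun s hs => ?_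
    rw [dif_pos (Finset.mem_image_of_mem _ hs)]
    exact triv_factor W hP htr hs _ rfl
  · refine Finset.prod_congr rfl fun P _ => ?_
    rw [fib_Psi x hf P]
    exact rfl

end S7

namespace S7

variable {σ R : Type*} [DecidableEq σ] [CommRing R] {zs : Finset σ}

lemma claim4 (W : ℕ → Multiset σ → R) (g k : ℕ) (t β : Finset σ)
    (ht : t.card = k) (hβ : β ⊆ t) :
    (∑ x ∈ (ESet g k t zs).filter fun x => trivSet x = β, term W x)
      = (∏ s ∈ β, W 0 {s}) * ∑ y ∈ RSet g (k - β.card) (t \ β) zs, term W y := by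
  classical
  have hkβ : β.card ≤ k := ht ▸ Finset.card_le_card hβ
  have hgood : ∀ x ∈ (ESet g k t zs).filter fun x => trivSet x = β,
      x.1 ∈ setPartitions t ∧ (∀ P, x.2.2 P < g + x.1.card + 1) ∧ econd g k x ∧
        trivSet x = β := by
    intro x hx
    obtain ⟨h1, h2⟩ := Finset.mem_filter.mp hx
    obtain ⟨a, b, c⟩ := mem_ESet.mp h1
    exact ⟨a, b, c, h2⟩
  rw [Finset.mul_sum]
  refine Finset.sum_bij'
    (fun x hx => Psi β x (G3' (hgood x hx).1 (hgood x hx).2.2.2))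
    (fun y _ => Phi β y) ?_ ?_ ?_ ?_ ?_
  · -- hi : Psi lands in RSet
    intro x hx
    obtain ⟨hP, hb, he, htr⟩ := hgood x hx
    have hcard := Finset.card_sdiff_add_card_eq_card (G5' hP htr)
    rw [Finset.card_image_of_injective β Finset.singleton_injective] at hcard
    refine mem_RSet.mpr ⟨G6' hP htr, ?_, ?_, ?_⟩
    · intro P
      have h1 := gs_le he ⟨P.1, (Finset.mem_sdiff.mp P.2).1⟩
      show x.2.2 ⟨P.1, (Finset.mem_sdiff.mp P.2).1⟩
          < g + (x.1 \ β.image fun s => ({s} : Finset σ)).card + 1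
      omega
    · have hsum := sum_Psi hP htr
      have he' : (∑ P : { P // P ∈ x.1 }, (x.2.2 P : ℤ)) = (g : ℤ) + x.1.card - k := he
      show (∑ P : { P // P ∈ x.1 \ β.image fun s => ({s} : Finset σ) },
          (x.2.2 ⟨P.1, (Finset.mem_sdiff.mp P.2).1⟩ : ℤ))
        = (g : ℤ) + (x.1 \ β.image fun s => ({s} : Finset σ)).card - ↑(k - β.card)
      rw [← hsum, he']
      omega
    · intro P
      show ¬(x.2.2 ⟨P.1, (Finset.mem_sdiff.mp P.2).1⟩ = 0 ∧
        P.1.card + (fib (Psi β x (G3' (hgood x hx).1 (hgood x hx).2.2.2)) P).card = 1)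
      have h4 := G4' (P := ⟨P.1, (Finset.mem_sdiff.mp P.2).1⟩) hP htr (Finset.mem_sdiff.mp P.2).2
      rw [← fib_Psi x (G3' (hgood x hx).1 (hgood x hx).2.2.2) P] at h4
      exact h4
  · -- hj : Phi lands in the filtered ESet
    intro y hy
    obtain ⟨hp', hb', he', hr'⟩ := mem_RSet.mp hy
    have hdis := Ldisj hp'
    have hPt := L1 hβ hp'
    have hcard2 : (y.1 ∪ β.image fun s => ({s} : Finset σ)).card = y.1.card + β.card := by
      rw [Finset.card_union_of_disjoint hdis,
        Finset.card_image_of_injective β Finset.singleton_injective]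
    rw [Finset.mem_filter]
    constructor
    · refine mem_ESet.mpr ⟨hPt, ?_, ?_⟩
      · intro P
        show (if h : P.1 ∈ y.1 then y.2.2 ⟨P.1, h⟩ else 0)
            < g + (y.1 ∪ β.image fun s => ({s} : Finset σ)).card + 1
        split
        next h => have := hb' ⟨P.1, h⟩; omega
        next => omega
      · have hsum := sum_Phi y hdis
        have he'' : (∑ P : { P // P ∈ y.1 }, (y.2.2 P : ℤ))
            = (g : ℤ) + y.1.card - ↑(k - β.card) := he'
        show (∑ P : { P // P ∈ y.1 ∪ β.image fun s => ({s} : Finset σ) },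
            ((Phi β y).2.2 P : ℤ))
          = (g : ℤ) + (y.1 ∪ β.image fun s => ({s} : Finset σ)).card - ↑k
        rw [hsum, he'']
        omega
    · ext s
      rw [mem_trivSet hPt]
      constructor
      · rintro ⟨h, hg0, hfib⟩
        rcases Finset.mem_union.mp h with h1 | h1
        · exfalso
          refine hr' ⟨{s}, h1⟩ ⟨?_, ?_⟩
          · have hg0' : (if hh : ({s} : Finset σ) ∈ y.1 then y.2.2 ⟨{s}, hh⟩ else 0) = 0 := hg0
            rwa [dif_pos h1] at hg0'
          · have hfib' := fib_Phi_mem y ⟨{s}, h⟩ h1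
            have hfib2 : fib y ⟨{s}, h1⟩ = ∅ := hfib'.symm.trans hfib
            simp [hfib2]
        · obtain ⟨s', hs', he2⟩ := Finset.mem_image.mp h1
          exact (Finset.singleton_inj.mp he2) ▸ hs'
      · intro hs
        have hnot : ({s} : Finset σ) ∉ y.1 :=
          Finset.disjoint_right.mp hdis (Finset.mem_image_of_mem _ hs)
        have h : ({s} : Finset σ) ∈ y.1 ∪ β.image fun s => ({s} : Finset σ) :=
          Finset.mem_union_right _ (Finset.mem_image_of_mem _ hs)
        refine ⟨h, ?_, ?_⟩
        · show (if hh : ({s} : Finset σ) ∈ y.1 then y.2.2 ⟨{s}, hh⟩ else 0) = 0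
          rw [dif_neg hnot]
        · exact fib_Phi_not_mem y ⟨{s}, h⟩ hnot
  · -- left inverse : Phi (Psi x) = x
    intro x hx
    obtain ⟨hP, hb, he, htr⟩ := hgood x hx
    refine Idx.ext' (Finset.sdiff_union_of_subset (G5' hP htr)) (fun a => rfl) ?_
    intro P
    dsimp only [Phi, Psi]
    by_cases h : P.1 ∈ x.1 \ β.image fun s => ({s} : Finset σ)
    · exact dif_pos h
    · refine (dif_neg h).trans ?_
      have him' : P.1 ∈ β.image fun s => ({s} : Finset σ) :=
        (Finset.mem_union.mp P.2).resolve_left h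
      exact ((G2' hP htr him').1).symm
  · -- right inverse : Psi (Phi y) = y
    intro y hy
    obtain ⟨hp', hb', he', hr'⟩ := mem_RSet.mp hy
    have hdis := Ldisj hp'
    refine Idx.ext' (Finset.union_sdiff_cancel_right hdis) (fun a => rfl) ?_
    intro P
    have hy1 : P.1 ∈ y.1 := by
      have h2 : P.1 ∈ (y.1 ∪ β.image fun s => ({s} : Finset σ)) \ β.image fun s => ({s} : Finset σ) := P.2
      rw [Finset.union_sdiff_cancel_right hdis] at h2
      exact h2
    dsimp only [Phi, Psi]
    rw [dif_pos hy1]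
  · -- summand equality
    intro x hx
    obtain ⟨hP, hb, he, htr⟩ := hgood x hx
    exact prod_Psi W hP htr _
end S7

/-- Lemma 3.14 of Bouchard–Eynard: for all `g, n, k ≥ 0`,
`E^{(k)}W_{g,n+1}(t; z) = ∑_{i=0}^k ∑_{β ⊆ t, |β| = i} (∏_{s∈β} W_{0,1}(s)) ·
R^{(k-i)}W_{g,n+1}(t∖β; z)`. -/
theorem stmt7 {σ R : Type*} [DecidableEq σ] [CommRing R]
    (W : ℕ → Multiset σ → R) (k g : ℕ) (t zs : Finset σ) (ht : t.card = k)
    (hd : Disjoint t zs) :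
    Esum W k g t zs =
      ∑ i ∈ Finset.range (k + 1), ∑ β ∈ t.powersetCard i,
        (∏ s ∈ β, W 0 {s}) * Rsum W (k - i) g (t \ β) zs := by
  classical
  calc Esum W k g t zs
      = ∑ x ∈ S7.ESet g k t zs, S7.term W x := S7.Esum_eq W g k t
    _ = ∑ β ∈ t.powerset, ∑ x ∈ (S7.ESet g k t zs).filter fun x => S7.trivSet x = β,
          S7.term W x :=
        (Finset.sum_fiberwise_of_maps_to
          (fun x hx => Finset.mem_powerset.mpr (S7.trivSet_subset (S7.mem_ESet.mp hx).1))
          _).symm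
    _ = ∑ β ∈ t.powerset, (∏ s ∈ β, W 0 {s}) * Rsum W (k - β.card) g (t \ β) zs := by
        refine Finset.sum_congr rfl fun β hβ => ?_
        rw [S7.claim4 W g k t β ht (Finset.mem_powerset.mp hβ), ← S7.Rsum_eq]
    _ = ∑ i ∈ Finset.range (t.card + 1), ∑ β ∈ t.powersetCard i,
          (∏ s ∈ β, W 0 {s}) * Rsum W (k - β.card) g (t \ β) zs :=
        Finset.sum_powerset t _
    _ = ∑ i ∈ Finset.range (k + 1), ∑ β ∈ t.powersetCard i,
          (∏ s ∈ β, W 0 {s}) * Rsum W (k - i) g (t \ β) zs := by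
        rw [ht]
        refine Finset.sum_congr rfl fun i _ => Finset.sum_congr rfl fun β hβ => ?_
        rw [(Finset.mem_powersetCard.mp hβ).2]
end
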